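/- Let a₁, a₂, a₃, ... be nonnegative reals with Σ aᵢ = 1 and a = sup{a₁, a₂, ...}. Then for any k ≥ 2 and 2 ≤ i ≤ k, Σ_{j₁+...+jᵢ = k, jₗ ≥ 1} a_{j₁} a_{j₂} ⋯ a_{jᵢ} ≤ (1 - a_k)·a. -/
import Mathlib


open Filter Topology

/-- If `a₁, a₂, …` are nonnegative reals with `Σ aᵢ = 1` and `a = sup aᵢ`, then for any
`k ≥ 2` and `2 ≤ i ≤ k`, the sum of `a_{j₁}⋯a_{jᵢ}` over all `i`-tuples of positive
integers with `j₁+⋯+jᵢ = k` is at most `(1 - a_k)·a`. -/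
theorem stmt11 (a : ℕ → ℝ) (ha : ∀ j, 0 ≤ a j)
    (hsum : HasSum (fun j : ℕ => a (j + 1)) 1)
    (k i : ℕ) (hk : 2 ≤ k) (hi2 : 2 ≤ i) (hik : i ≤ k) :
    ∑ f ∈ (Finset.Nat.antidiagonalTuple i k).filter (fun f => ∀ l, f l ≠ 0),
        ∏ l : Fin i, a (f l)
      ≤ (1 - a k) * (⨆ j : ℕ, a (j + 1)) := by
  obtain ⟨m, rfl⟩ : ∃ m, i = m + 2 := ⟨i - 2, by omega⟩
  set T := (Finset.Nat.antidiagonalTuple (m + 2) k).filter (fun f => ∀ l, f l ≠ 0) with hT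
  -- facts about the supremum
  have hbdd : BddAbove (Set.range fun j : ℕ => a (j + 1)) := by
    refine ⟨1, ?_⟩
    rintro x ⟨j, rfl⟩
    exact le_hasSum hsum j (fun _ _ => ha _)
  have hsup0 : 0 ≤ ⨆ j : ℕ, a (j + 1) := le_trans (ha 1) (le_ciSup hbdd 0)
  have hsupmem : ∀ j, 1 ≤ j → a j ≤ ⨆ j : ℕ, a (j + 1) := by
    intro j hj
    have := le_ciSup hbdd (j - 1)
    simpa [Nat.sub_add_cancel hj] using this
  -- the partial sum s
  set s := ∑ j ∈ Finset.Icc 1 (k - 1), a j with hs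
  have hs0 : 0 ≤ s := Finset.sum_nonneg fun _ _ => ha _
  have hIcc : ∑ j ∈ Finset.Icc 1 k, a j = s + a k := by
    have hk1 : k = (k - 1) + 1 := by omega
    rw [hs]
    nth_rewrite 1 [hk1]
    rw [Finset.sum_Icc_succ_top (by omega) a, ← hk1]
  have hrange : ∑ j ∈ Finset.range k, a (j + 1) = ∑ j ∈ Finset.Icc 1 k, a j := by
    refine Finset.sum_nbij' (fun j => j + 1) (fun j => j - 1) ?_ ?_ ?_ ?_ ?_ <;>
      intros <;> simp_all [Finset.mem_range, Finset.mem_Icc] <;> omega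
  have hsk : s + a k ≤ 1 := by
    rw [← hIcc, ← hrange]
    exact sum_le_hasSum _ (fun _ _ => ha _) hsum
  have hs1 : s ≤ 1 := by linarith [ha k]
  -- membership facts
  have hmemT : ∀ f ∈ T, (∑ l, f l = k) ∧ ∀ l, 1 ≤ f l := by
    intro f hf
    rw [hT, Finset.mem_filter, Finset.Nat.mem_antidiagonalTuple] at hf
    exact ⟨hf.1, fun l => Nat.one_le_iff_ne_zero.2 (hf.2 l)⟩
  have htail : ∀ f ∈ T, ∀ l : Fin (m + 1), f l.succ ∈ Finset.Icc 1 (k - 1) := by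
    intro f hf l
    obtain ⟨hsumf, hpos⟩ := hmemT f hf
    have h2 : f 0 + f l.succ ≤ ∑ l, f l := by
      have : ∑ x ∈ ({0, l.succ} : Finset (Fin (m + 2))), f x ≤ ∑ l, f l :=
        Finset.sum_le_sum_of_subset (Finset.subset_univ _)
      rwa [Finset.sum_pair (Fin.succ_ne_zero l).symm] at this
    rw [Finset.mem_Icc]
    have := hpos 0
    have := hpos l.succ
    omega
  -- key bound on the tail sum
  have key : ∑ f ∈ T, ∏ l : Fin (m + 1), a (f l.succ) ≤ s := by
    have hinj : Set.InjOn (fun f : Fin (m + 2) → ℕ => f ∘ Fin.succ) T := by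
      intro f hf g hg h
      have h1 := (hmemT f hf).1
      have h2 := (hmemT g hg).1
      rw [Fin.sum_univ_succ] at h1 h2
      have htl : ∀ l : Fin (m + 1), f l.succ = g l.succ := fun l => congrFun h l
      have hsame : ∑ l : Fin (m + 1), f l.succ = ∑ l : Fin (m + 1), g l.succ :=
        Finset.sum_congr rfl fun l _ => htl l
      have h0 : f 0 = g 0 := by omega
      funext l
      cases l using Fin.cases with
      | zero => exact h0
      | succ l => exact htl l
    have himg : ∑ f ∈ T, ∏ l : Fin (m + 1), a (f l.succ)
        = ∑ g ∈ T.image (fun f => f ∘ Fin.succ), ∏ l : Fin (m + 1), a (g l) := by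
      rw [Finset.sum_image fun f hf g hg h => hinj hf hg h]
      rfl
    rw [himg]
    have hsub : T.image (fun f => f ∘ Fin.succ)
        ⊆ Fintype.piFinset (fun _ : Fin (m + 1) => Finset.Icc 1 (k - 1)) := by
      intro g hg
      rw [Finset.mem_image] at hg
      obtain ⟨f, hf, rfl⟩ := hg
      rw [Fintype.mem_piFinset]
      exact fun l => htail f hf l
    calc ∑ g ∈ T.image (fun f => f ∘ Fin.succ), ∏ l : Fin (m + 1), a (g l)
        ≤ ∑ g ∈ Fintype.piFinset (fun _ : Fin (m + 1) => Finset.Icc 1 (k - 1)),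
            ∏ l : Fin (m + 1), a (g l) :=
          Finset.sum_le_sum_of_subset_of_nonneg hsub
            (fun _ _ _ => Finset.prod_nonneg fun _ _ => ha _)
      _ = ∏ _l : Fin (m + 1), s := by
          rw [← Finset.prod_univ_sum]
      _ = s ^ (m + 1) := by rw [Finset.prod_const, Finset.card_univ, Fintype.card_fin]
      _ ≤ s ^ 1 := pow_le_pow_of_le_one hs0 hs1 (by omega)
      _ = s := pow_one s
  -- main chain
  calc ∑ f ∈ T, ∏ l : Fin (m + 2), a (f l)
      = ∑ f ∈ T, a (f 0) * ∏ l : Fin (m + 1), a (f l.succ) := by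
        exact Finset.sum_congr rfl fun f hf => by rw [Fin.prod_univ_succ]
    _ ≤ ∑ f ∈ T, (⨆ j : ℕ, a (j + 1)) * ∏ l : Fin (m + 1), a (f l.succ) := by
        refine Finset.sum_le_sum fun f hf => ?_
        exact mul_le_mul_of_nonneg_right (hsupmem _ ((hmemT f hf).2 0))
          (Finset.prod_nonneg fun _ _ => ha _)
    _ = (⨆ j : ℕ, a (j + 1)) * ∑ f ∈ T, ∏ l : Fin (m + 1), a (f l.succ) := by
        rw [Finset.mul_sum]
    _ ≤ (⨆ j : ℕ, a (j + 1)) * s := by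
        exact mul_le_mul_of_nonneg_left key hsup0
    _ ≤ (⨆ j : ℕ, a (j + 1)) * (1 - a k) := by
        exact mul_le_mul_of_nonneg_left (by linarith) hsup0
    _ = (1 - a k) * (⨆ j : ℕ, a (j + 1)) := mul_comm _ _
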